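/- Let H be the connected graph on n vertices that is the union of a complete graph K_m (m < n) and star graphs centered at vertices of K_m, each star having at least one leaf, meeting K_m only in its center, distinct stars being otherwise vertex-disjoint, and the leaves of the stars being exactly the n − m vertices outside K_m. Then the ideal of vertex covers I_c(H) has a linear resolution (a minimal graded free resolution in which all minimal generators of I_c(H) have the same degree d and all syzygy matrices have linear entries, i.e., the j-th module in the resolution is generated in degree d + j) if and only if every star graph in the decomposition has exactly two vertices, i.e., every star has exactly one edge. -/

import Mathlib

open MvPolynomial Finset

/-- A set of vertices is a vertex cover if it meets every edge. -/
def IsVertexCover {V : Type*} (G : SimpleGraph V) (C : Set V) : Prop :=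
  ∀ ⦃u v : V⦄, G.Adj u v → u ∈ C ∨ v ∈ C

/-- The ideal of vertex covers of a graph on `Fin n`. -/
noncomputable def coverIdeal (K : Type*) [Field K] {n : ℕ} (G : SimpleGraph (Fin n)) :
    Ideal (MvPolynomial (Fin n) K) :=
  Ideal.span { p | ∃ C : Finset (Fin n), IsVertexCover G ↑C ∧ p = ∏ i ∈ C, X i }

/-- The edge ideal of a graph on `Fin n`. -/
noncomputable def edgeIdeal (K : Type*) [Field K] {n : ℕ} (G : SimpleGraph (Fin n)) :
    Ideal (MvPolynomial (Fin n) K) :=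
  Ideal.span { p | ∃ u v : Fin n, G.Adj u v ∧ p = X u * X v }

/-- `p` is a minimal monomial generator of the monomial ideal `I`:
it is a monomial in `I` none of whose proper monomial divisors lies in `I`. -/
def IsMinimalMonomialGen {K : Type*} [Field K] {n : ℕ}
    (I : Ideal (MvPolynomial (Fin n) K)) (p : MvPolynomial (Fin n) K) : Prop :=
  ∃ a : Fin n →₀ ℕ, p = monomial a (1 : K) ∧ p ∈ I ∧
    ∀ b : Fin n →₀ ℕ, b ≤ a → b ≠ a → monomial b (1 : K) ∉ I

/-- The maximal graded ideal (X_1, …, X_n) of the polynomial ring. -/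
noncomputable def gradedMaxIdeal (K : Type*) [Field K] (n : ℕ) :
    Ideal (MvPolynomial (Fin n) K) :=
  Ideal.span (Set.range X)

/-- The set of lengths of regular sequences on `R/I` consisting of elements of the
maximal graded ideal; its greatest element is the depth of `R/I`. -/
def depthSet (K : Type*) [Field K] {n : ℕ} (I : Ideal (MvPolynomial (Fin n) K)) : Set ℕ :=
  {k | ∃ rs : List (MvPolynomial (Fin n) K), rs.length = k ∧
    (∀ r ∈ rs, r ∈ gradedMaxIdeal K n) ∧
    RingTheory.Sequence.IsRegular (MvPolynomial (Fin n) K ⧸ I) rs}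

/-- A minimal graded free resolution of `R/I`:
`⋯ → F₂ → F₁ → F₀ = R → R/I → 0`, where `F_{j+1}` is free of rank `rk j` with
generator degrees `dgr j`, the map `F₁ → R` is given by the row `g` (whose image is `I`),
and the map `F_{j+2} → F_{j+1}` is given by the matrix `M j`.  All matrix entries are
homogeneous of the appropriate degree and lie in the maximal graded ideal (minimality),
and the complex is exact at every `F_{j}`, `j ≥ 1`. -/
def IsMinimalGradedFreeResolution {K : Type*} [Field K] {n : ℕ}
    (I : Ideal (MvPolynomial (Fin n) K))
    (rk : ℕ → ℕ) (dgr : ∀ j : ℕ, Fin (rk j) → ℕ)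
    (g : Fin (rk 0) → MvPolynomial (Fin n) K)
    (M : ∀ j : ℕ, Matrix (Fin (rk j)) (Fin (rk (j + 1))) (MvPolynomial (Fin n) K)) : Prop :=
  Ideal.span (Set.range g) = I ∧
  (∀ i, (g i).IsHomogeneous (dgr 0 i)) ∧
  (∀ i, constantCoeff (g i) = 0) ∧
  (∀ (j : ℕ) (k : Fin (rk j)) (i : Fin (rk (j + 1))),
      (M j k i).IsHomogeneous (dgr (j + 1) i - dgr j k)) ∧
  (∀ (j : ℕ) (k : Fin (rk j)) (i : Fin (rk (j + 1))),
      dgr (j + 1) i ≤ dgr j k → M j k i = 0) ∧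
  LinearMap.ker (Fintype.linearCombination (MvPolynomial (Fin n) K) g)
    = LinearMap.range (M 0).mulVecLin ∧
  (∀ j : ℕ, LinearMap.ker (M j).mulVecLin = LinearMap.range (M (j + 1)).mulVecLin)

noncomputable section

namespace CoverAux

variable {n : ℕ} {K : Type*} [Field K]

/-- indicator finsupp of a finset -/
def ind (C : Finset (Fin n)) : Fin n →₀ ℕ := ∑ i ∈ C, Finsupp.single i 1

lemma ind_apply (C : Finset (Fin n)) (j : Fin n) :
    ind C j = if j ∈ C then 1 else 0 := by
  classical
  simp only [ind, Finset.sum_apply', Finsupp.single_apply]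
  rw [Finset.sum_ite_eq' C j (fun _ => 1)]

lemma ind_le_ind_iff {C D : Finset (Fin n)} : ind C ≤ ind D ↔ C ⊆ D := by
  constructor
  · intro h i hi
    have := h i
    rw [ind_apply, ind_apply, if_pos hi] at this
    by_contra hd
    rw [if_neg hd] at this; omega
  · intro h i
    rw [ind_apply, ind_apply]
    split_ifs with h1 h2
    · exact le_rfl
    · exact absurd (h h1) h2
    · omega
    · exact le_rfl

lemma degree_ind (C : Finset (Fin n)) : (ind C).degree = C.card := by
  classical
  rw [Finsupp.degree_eq_weight_one]
  simp only [ind, map_sum]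
  rw [Finset.sum_congr rfl (fun i _ => ?_), Finset.sum_const, smul_eq_mul, mul_one]
  rw [← Finsupp.degree_eq_weight_one]
  simp [Finsupp.degree_apply, Finsupp.support_single_ne_zero]

lemma prod_X_eq (C : Finset (Fin n)) :
    (∏ i ∈ C, X i : MvPolynomial (Fin n) K) = monomial (ind C) 1 := by
  classical
  induction C using Finset.cons_induction with
  | empty => simp [ind]
  | cons a s ha ih =>
      rw [Finset.prod_cons, ih]
      have : ind (Finset.cons a s ha) = Finsupp.single a 1 + ind s := by
        rw [ind, ind, Finset.sum_cons]
      rw [this, X, monomial_mul, one_mul]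


lemma coverIdeal_eq_span (H : SimpleGraph (Fin n)) :
    coverIdeal K H = Ideal.span ((fun s => monomial s (1 : K)) ''
      {s : Fin n →₀ ℕ | ∃ C : Finset (Fin n), IsVertexCover H ↑C ∧ s = ind C}) := by
  unfold coverIdeal
  congr 1
  ext p
  constructor
  · rintro ⟨C, hC, rfl⟩
    exact ⟨ind C, ⟨C, hC, rfl⟩, (prod_X_eq C).symm⟩
  · rintro ⟨s, ⟨C, hC, rfl⟩, rfl⟩
    exact ⟨C, hC, (prod_X_eq C).symm⟩

lemma support_subset_covers {H : SimpleGraph (Fin n)} {p : MvPolynomial (Fin n) K}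
    (hp : p ∈ coverIdeal K H) (v : Fin n →₀ ℕ) (hv : v ∈ p.support) :
    ∃ C : Finset (Fin n), IsVertexCover H ↑C ∧ ind C ≤ v := by
  rw [coverIdeal_eq_span, mem_ideal_span_monomial_image] at hp
  obtain ⟨s, ⟨C, hC, rfl⟩, hs⟩ := hp v hv
  exact ⟨C, hC, hs⟩

lemma prod_X_mem_coverIdeal {H : SimpleGraph (Fin n)} {C : Finset (Fin n)}
    (hC : IsVertexCover H ↑C) : (∏ i ∈ C, X i : MvPolynomial (Fin n) K) ∈ coverIdeal K H :=
  Ideal.subset_span ⟨C, hC, rfl⟩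

lemma monomial_ind_mem {H : SimpleGraph (Fin n)} {C : Finset (Fin n)}
    (hC : IsVertexCover H ↑C) : (monomial (ind C) (1:K)) ∈ coverIdeal K H := by
  rw [← prod_X_eq]; exact prod_X_mem_coverIdeal hC


lemma degree_le_of_homogeneous_gens {N : ℕ} {d : ℕ} {g : Fin N → MvPolynomial (Fin n) K}
    (hg : ∀ i, (g i).IsHomogeneous d) {b : Fin n →₀ ℕ}
    (hb : (monomial b (1:K)) ∈ Ideal.span (Set.range g)) : d ≤ b.degree := by
  by_contra hlt
  push_neg at hlt
  obtain ⟨c, hc⟩ := (Submodule.mem_span_range_iff_exists_fun (MvPolynomial (Fin n) K)).mp hb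
  have h1 : coeff b (monomial b (1:K)) = 1 := by simp
  rw [← hc] at h1
  simp only [smul_eq_mul] at h1
  rw [coeff_sum] at h1
  have : ∀ i ∈ Finset.univ, coeff b (c i * g i) = 0 := by
    intro i _
    rw [coeff_mul]
    apply Finset.sum_eq_zero
    rintro ⟨u, v⟩ huv
    rw [Finset.HasAntidiagonal.mem_antidiagonal] at huv
    by_contra hne
    have hgv : coeff v (g i) ≠ 0 := by
      intro h0; rw [h0, mul_zero] at hne; exact hne rfl
    have hdeg : (Finsupp.weight (1 : Fin n → ℕ)) v = d := hg i hgv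
    have hw : (Finsupp.weight (1 : Fin n → ℕ)) v ≤ (Finsupp.weight (1 : Fin n → ℕ)) b := by
      rw [← huv, map_add]; exact le_add_self
    rw [hdeg, Pi.one_def, ← Finsupp.degree_eq_weight_one] at hw
    omega
  rw [Finset.sum_eq_zero this] at h1
  exact one_ne_zero h1.symm

lemma exists_support_divisor {N : ℕ} {g : Fin N → MvPolynomial (Fin n) K}
    {b : Fin n →₀ ℕ}
    (hb : (monomial b (1:K)) ∈ Ideal.span (Set.range g)) :
    ∃ i, ∃ v ∈ (g i).support, v ≤ b := by
  obtain ⟨c, hc⟩ := (Submodule.mem_span_range_iff_exists_fun (MvPolynomial (Fin n) K)).mp hb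
  have h1 : coeff b (monomial b (1:K)) = 1 := by simp
  rw [← hc] at h1
  simp only [smul_eq_mul] at h1
  rw [coeff_sum] at h1
  have : ∃ i ∈ Finset.univ, coeff b (c i * g i) ≠ 0 := by
    by_contra hall
    push_neg at hall
    rw [Finset.sum_eq_zero hall] at h1
    exact one_ne_zero h1.symm
  obtain ⟨i, _, hi⟩ := this
  rw [coeff_mul] at hi
  obtain ⟨⟨u, v⟩, huv, hne⟩ := Finset.exists_ne_zero_of_sum_ne_zero hi
  rw [Finset.HasAntidiagonal.mem_antidiagonal] at huv
  refine ⟨i, v, ?_, ?_⟩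
  · rw [mem_support_iff]
    intro h0; rw [h0, mul_zero] at hne; exact hne rfl
  · rw [← huv]; exact le_add_self

section Construction

lemma X_dvd_iff' {i : Fin n} {p : MvPolynomial (Fin n) K} :
    X i ∣ p ↔ ∀ d ∈ p.support, d i ≠ 0 := by
  have h1 : X i ∣ p ↔ p ∈ Ideal.span (MvPolynomial.X '' {i} : Set (MvPolynomial (Fin n) K)) := by
    rw [Set.image_singleton, Ideal.mem_span_singleton]
  rw [h1, mem_ideal_span_X_image]
  simp

lemma X_dvd_of_dvd_mul_monomial {i : Fin n} {c : MvPolynomial (Fin n) K} {b : Fin n →₀ ℕ}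
    (hb : b i = 0) (h : X i ∣ c * monomial b 1) : X i ∣ c := by
  rw [X_dvd_iff'] at h ⊢
  intro d hd
  have hmem : d + b ∈ (c * monomial b (1:K)).support := by
    rw [mem_support_iff, coeff_mul_monomial, mul_one]
    exact mem_support_iff.mp hd
  have := h _ hmem
  simpa [Finsupp.add_apply, hb] using this

variable {m : ℕ}

/-- ranks of the resolution -/
def Rk (m : ℕ) : ℕ → ℕ := fun j => match j with
  | 0 => m + 1
  | 1 => m
  | _ + 2 => 0

variable (K) in
/-- generators of the cover ideal -/
def Gens (A : Finset (Fin n)) (e ly : Fin m → Fin n) : Fin (m + 1) → MvPolynomial (Fin n) K :=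
  Fin.cases (∏ v ∈ A, X v) (fun i => ∏ v ∈ insert (ly i) (A.erase (e i)), X v)

variable (K) in
/-- first syzygy matrix -/
def Mz (A : Finset (Fin n)) (e ly : Fin m → Fin n) :
    Matrix (Fin (m + 1)) (Fin m) (MvPolynomial (Fin n) K) :=
  fun k i => Fin.cases (-(X (ly i))) (fun k' => if k' = i then X (e i) else 0) k

variable {A : Finset (Fin n)} {e ly : Fin m → Fin n}

lemma col_identity (he : ∀ i, e i ∈ A) (hly : ∀ i, ly i ∉ A) (i : Fin m) :
    X (e i) * Gens K A e ly i.succ = X (ly i) * Gens K A e ly 0 := by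
  have h1 : Gens K A e ly i.succ = X (ly i) * ∏ v ∈ A.erase (e i), X v := by
    rw [Gens, Fin.cases_succ, Finset.prod_insert]
    intro hmem
    exact hly i (Finset.mem_of_mem_erase hmem)
  have h2 : Gens K A e ly 0 = X (e i) * ∏ v ∈ A.erase (e i), X v := by
    rw [Gens, Fin.cases_zero, Finset.mul_prod_erase A _ (he i)]
  rw [h1, h2]; ring

lemma X_dvd_gens (he : ∀ i, e i ∈ A) (hinj : Function.Injective e)
    (i : Fin m) (k : Fin (m + 1)) (hk : k ≠ i.succ) :
    X (e i) ∣ Gens K A e ly k := by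
  induction k using Fin.cases with
  | zero =>
      rw [Gens, Fin.cases_zero]
      exact Finset.dvd_prod_of_mem _ (he i)
  | succ j =>
      have hij : j ≠ i := fun h => hk (by rw [h])
      rw [Gens, Fin.cases_succ]
      refine Finset.dvd_prod_of_mem _ ?_
      refine Finset.mem_insert_of_mem (Finset.mem_erase.mpr ⟨?_, he i⟩)
      exact fun h => hij (hinj h).symm

lemma e_not_mem_Ci (he : ∀ i, e i ∈ A) (hly : ∀ i, ly i ∉ A) (i : Fin m) :
    e i ∉ insert (ly i) (A.erase (e i)) := by
  intro hmem
  rcases Finset.mem_insert.mp hmem with h | h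
  · exact hly i (h ▸ he i)
  · exact (Finset.mem_erase.mp h).1 rfl

lemma gens_zero_ne_zero : Gens K A e ly 0 ≠ 0 := by
  rw [Gens, Fin.cases_zero, prod_X_eq]
  intro h
  have := congrArg (coeff (ind A)) h
  rw [coeff_monomial, if_pos rfl, coeff_zero] at this
  exact one_ne_zero this

lemma mulVec_zero' (t : Fin m → MvPolynomial (Fin n) K) :
    (Mz K A e ly).mulVec t 0 = ∑ i : Fin m, -(X (ly i) * t i) := by
  simp only [Matrix.mulVec, dotProduct, Mz, Fin.cases_zero]
  exact Finset.sum_congr rfl fun i _ => by ring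

lemma mulVec_succ' (t : Fin m → MvPolynomial (Fin n) K) (j : Fin m) :
    (Mz K A e ly).mulVec t j.succ = X (e j) * t j := by
  simp only [Matrix.mulVec, dotProduct, Mz, Fin.cases_succ]
  rw [Finset.sum_congr rfl (fun i (_ : i ∈ Finset.univ) =>
    show (if j = i then X (e i) else 0) * t i = if j = i then X (e i) * t i else 0 by
      split_ifs <;> ring)]
  rw [Finset.sum_ite_eq Finset.univ j (fun i => X (e i) * t i), if_pos (Finset.mem_univ j)]

lemma exact_first (he : ∀ i, e i ∈ A) (hinj : Function.Injective e) (hly : ∀ i, ly i ∉ A) :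
    LinearMap.ker (Fintype.linearCombination (MvPolynomial (Fin n) K)
        (Gens K A e ly))
      = LinearMap.range (Mz K A e ly).mulVecLin := by
  ext c
  simp only [LinearMap.mem_ker, Fintype.linearCombination_apply, LinearMap.mem_range,
    Matrix.mulVecLin_apply, smul_eq_mul]
  constructor
  · intro hc
    have hdvd : ∀ i : Fin m, X (e i) ∣ c i.succ := by
      intro i
      have hsplit : c i.succ * Gens K A e ly i.succ
          = - ∑ k ∈ Finset.univ.erase i.succ, c k * Gens K A e ly k := by
        have h2 := Finset.add_sum_erase Finset.univ (fun k => c k * Gens K A e ly k)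
          (Finset.mem_univ i.succ)
        rw [hc] at h2
        linear_combination h2
      have hdvd2 : X (e i) ∣ c i.succ * Gens K A e ly i.succ := by
        rw [hsplit]
        refine dvd_neg.mpr ?_
        refine Finset.dvd_sum fun k hk => ?_
        exact dvd_mul_of_dvd_right (X_dvd_gens he hinj i k (Finset.ne_of_mem_erase hk)) _
      rw [show Gens K A e ly i.succ = monomial (ind (insert (ly i) (A.erase (e i)))) (1:K) by
        rw [Gens, Fin.cases_succ, prod_X_eq]] at hdvd2
      refine X_dvd_of_dvd_mul_monomial ?_ hdvd2
      rw [ind_apply, if_neg (e_not_mem_Ci he hly i)]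
    choose t ht using hdvd
    refine ⟨t, ?_⟩
    have hc0 : c 0 = - ∑ i : Fin m, X (ly i) * t i := by
      rw [Fin.sum_univ_succ] at hc
      have hterm : ∀ i : Fin m, c i.succ * Gens K A e ly i.succ
          = (X (ly i) * t i) * Gens K A e ly 0 := by
        intro i
        calc c i.succ * Gens K A e ly i.succ = t i * (X (e i) * Gens K A e ly i.succ) := by
              rw [ht i]; ring
          _ = (X (ly i) * t i) * Gens K A e ly 0 := by rw [col_identity he hly i]; ring
      rw [Finset.sum_congr rfl (fun i _ => hterm i)] at hc
      rw [← Finset.sum_mul] at hc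
      have hfac : (c 0 + ∑ i : Fin m, X (ly i) * t i) * Gens K A e ly 0 = 0 := by
        linear_combination hc
      rcases mul_eq_zero.mp hfac with h | h
      · linear_combination h
      · exact absurd h gens_zero_ne_zero
    funext k
    induction k using Fin.cases with
    | zero =>
        rw [mulVec_zero', hc0, ← Finset.sum_neg_distrib]
    | succ j =>
        rw [mulVec_succ', ht j]
  · rintro ⟨t, rfl⟩
    rw [Fin.sum_univ_succ]
    simp only [mulVec_zero', mulVec_succ']
    rw [Finset.sum_mul, ← Finset.sum_add_distrib]
    refine Finset.sum_eq_zero (fun j (_ : j ∈ Finset.univ) => ?_)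
    have hcol := col_identity (K := K) he hly j
    linear_combination t j * hcol


section Graph

variable {A : Finset (Fin n)} {H : SimpleGraph (Fin n)} {f : Fin n → Fin n}

variable (hH : ∀ u v : Fin n, H.Adj u v ↔
      (u ∈ A ∧ v ∈ A ∧ u ≠ v) ∨ (u ∉ A ∧ v = f u) ∨ (v ∉ A ∧ u = f v))
  (hf : ∀ v : Fin n, v ∉ A → f v ∈ A)

include hH hf in
lemma cover_A : IsVertexCover H ↑A := by
  intro u v huv
  rw [hH] at huv
  rcases huv with ⟨h1, _, _⟩ | ⟨h1, h2⟩ | ⟨h1, h2⟩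
  · exact Or.inl h1
  · exact Or.inr (by rw [h2]; exact hf u h1)
  · exact Or.inl (by rw [h2]; exact hf v h1)

include hH in
lemma cover_sub_A (hstar : ∀ a ∈ A, ∃ v : Fin n, v ∉ A ∧ f v = a)
    {C : Finset (Fin n)} (hC : IsVertexCover H ↑C) (hsub : C ⊆ A) : C = A := by
  apply Finset.Subset.antisymm hsub
  intro a ha
  by_contra hc
  obtain ⟨v, hv, hfv⟩ := hstar a ha
  have hadj : H.Adj v a := by rw [hH]; exact Or.inr (Or.inl ⟨hv, hfv.symm⟩)
  rcases hC hadj with h | h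
  · exact hv (hsub h)
  · exact hc h

include hH hf in
lemma cover_S {a : Fin n} (ha : a ∈ A) :
    IsVertexCover H ↑(A.erase a ∪ Finset.univ.filter fun v => v ∉ A ∧ f v = a) := by
  intro u v huv
  rw [hH] at huv
  simp only [Finset.coe_union, Set.mem_union, Finset.coe_filter, Finset.coe_erase,
    Set.mem_setOf_eq, Set.mem_diff, Finset.mem_coe, Set.mem_singleton_iff,
    Finset.mem_erase, Finset.mem_univ, true_and, Finset.mem_filter]
  rcases huv with ⟨h1, h2, h3⟩ | ⟨h1, h2⟩ | ⟨h1, h2⟩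
  · rcases eq_or_ne u a with rfl | hu
    · exact Or.inr (Or.inl ⟨h2, Ne.symm h3⟩)
    · exact Or.inl (Or.inl ⟨h1, hu⟩)
  · rcases eq_or_ne (f u) a with hfu | hfu
    · exact Or.inl (Or.inr ⟨h1, hfu⟩)
    · refine Or.inr (Or.inl ⟨?_, ?_⟩)
      · rw [h2]; exact hf u h1
      · rw [h2]; exact hfu
  · rcases eq_or_ne (f v) a with hfv | hfv
    · exact Or.inr (Or.inr ⟨h1, hfv⟩)
    · refine Or.inl (Or.inl ⟨?_, ?_⟩)
      · rw [h2]; exact hf v h1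
      · rw [h2]; exact hfv

include hH in
lemma cover_min {a : Fin n} (ha : a ∈ A) {C : Finset (Fin n)}
    (hC : IsVertexCover H ↑C) (haC : a ∉ C) :
    A.erase a ∪ (Finset.univ.filter fun v => v ∉ A ∧ f v = a) ⊆ C := by
  intro x hx
  rcases Finset.mem_union.mp hx with hx | hx
  · obtain ⟨hxa, hxA⟩ := Finset.mem_erase.mp hx
    have hadj : H.Adj x a := by rw [hH]; exact Or.inl ⟨hxA, ha, hxa⟩
    rcases hC hadj with h | h
    · exact h
    · exact absurd h haC
  · obtain ⟨-, hxA, hfx⟩ := Finset.mem_filter.mp hx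
    have hadj : H.Adj x a := by rw [hH]; exact Or.inr (Or.inl ⟨hxA, hfx.symm⟩)
    rcases hC hadj with h | h
    · exact h
    · exact absurd h haC

lemma a_not_mem_S {a : Fin n} (ha : a ∈ A) :
    a ∉ A.erase a ∪ (Finset.univ.filter fun v => v ∉ A ∧ f v = a) := by
  simp [ha]

lemma card_S {a : Fin n} (ha : a ∈ A) :
    (A.erase a ∪ (Finset.univ.filter fun v => v ∉ A ∧ f v = a)).card
      = A.card - 1 + (Finset.univ.filter fun v => v ∉ A ∧ f v = a).card := by
  rw [Finset.card_union_of_disjoint, Finset.card_erase_of_mem ha]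
  refine Finset.disjoint_left.mpr fun x hx1 hx2 => ?_
  exact (Finset.mem_filter.mp hx2).2.1 (Finset.mem_of_mem_erase hx1)

end Graph

section SpanGens

variable {m : ℕ} {A : Finset (Fin n)} {e ly : Fin m → Fin n}
  {H : SimpleGraph (Fin n)} {f : Fin n → Fin n}

lemma filter_eq_singleton (hly : ∀ i, ly i ∉ A) (hlyf : ∀ i, f (ly i) = e i)
    (huniq : ∀ (i : Fin m) (w : Fin n), w ∉ A → f w = e i → w = ly i) (i : Fin m) :
    (Finset.univ.filter fun v => v ∉ A ∧ f v = e i) = {ly i} := by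
  ext v
  simp only [Finset.mem_filter, Finset.mem_univ, true_and, Finset.mem_singleton]
  constructor
  · rintro ⟨h1, h2⟩; exact huniq i v h1 h2
  · rintro rfl; exact ⟨hly i, hlyf i⟩

lemma Ci_eq (he : ∀ i, e i ∈ A) (hly : ∀ i, ly i ∉ A) (hlyf : ∀ i, f (ly i) = e i)
    (huniq : ∀ (i : Fin m) (w : Fin n), w ∉ A → f w = e i → w = ly i) (i : Fin m) :
    insert (ly i) (A.erase (e i))
      = A.erase (e i) ∪ (Finset.univ.filter fun v => v ∉ A ∧ f v = e i) := by
  rw [filter_eq_singleton hly hlyf huniq i]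
  ext v
  simp only [Finset.mem_insert, Finset.mem_union, Finset.mem_singleton]
  tauto

lemma span_gens
    (hH : ∀ u v : Fin n, H.Adj u v ↔
      (u ∈ A ∧ v ∈ A ∧ u ≠ v) ∨ (u ∉ A ∧ v = f u) ∨ (v ∉ A ∧ u = f v))
    (hf : ∀ v : Fin n, v ∉ A → f v ∈ A)
    (he : ∀ i, e i ∈ A) (hes : ∀ a ∈ A, ∃ i, e i = a)
    (hly : ∀ i, ly i ∉ A) (hlyf : ∀ i, f (ly i) = e i)
    (huniq : ∀ (i : Fin m) (w : Fin n), w ∉ A → f w = e i → w = ly i) :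
    Ideal.span (Set.range (Gens K A e ly)) = coverIdeal K H := by
  apply le_antisymm
  · rw [Ideal.span_le]
    rintro p ⟨k, rfl⟩
    induction k using Fin.cases with
    | zero =>
        rw [Gens, Fin.cases_zero]
        exact prod_X_mem_coverIdeal (cover_A hH hf)
    | succ i =>
        rw [Gens, Fin.cases_succ]
        have hcov : IsVertexCover H ↑(insert (ly i) (A.erase (e i))) := by
          rw [Ci_eq he hly hlyf huniq i]
          exact cover_S hH hf (he i)
        exact prod_X_mem_coverIdeal hcov
  · rw [coverIdeal, Ideal.span_le]
    rintro p ⟨C, hC, rfl⟩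
    simp only [SetLike.mem_coe]
    by_cases hsub : A ⊆ C
    · have hprod : (∏ i ∈ C, X i : MvPolynomial (Fin n) K)
          = (∏ i ∈ C \ A, X i) * Gens K A e ly 0 := by
        rw [Gens, Fin.cases_zero, Finset.prod_sdiff hsub]
      rw [hprod]
      exact Ideal.mul_mem_left _ _ (Ideal.subset_span ⟨0, rfl⟩)
    · obtain ⟨a, haA, haC⟩ := Finset.not_subset.mp hsub
      obtain ⟨i, rfl⟩ := hes a haA
      have hsub2 : insert (ly i) (A.erase (e i)) ⊆ C := by
        rw [Ci_eq he hly hlyf huniq i]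
        exact cover_min hH (he i) hC haC
      have hprod : (∏ v ∈ C, X v : MvPolynomial (Fin n) K)
          = (∏ v ∈ C \ insert (ly i) (A.erase (e i)), X v) * Gens K A e ly i.succ := by
        rw [Gens, Fin.cases_succ, Finset.prod_sdiff hsub2]
      rw [hprod]
      exact Ideal.mul_mem_left _ _ (Ideal.subset_span ⟨i.succ, rfl⟩)

end SpanGens

section Extra

variable {m : ℕ} {A : Finset (Fin n)} {e ly : Fin m → Fin n}

variable (K) in
/-- all the matrices of the resolution -/
def Mats (A : Finset (Fin n)) (e ly : Fin m → Fin n) :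
    ∀ j : ℕ, Matrix (Fin (Rk m j)) (Fin (Rk m (j + 1))) (MvPolynomial (Fin n) K)
  | 0 => Mz K A e ly
  | (_ + 1) => fun _ _ => 0

lemma degree_mono {u v : Fin n →₀ ℕ} (h : u ≤ v) : u.degree ≤ v.degree := by
  obtain ⟨w, rfl⟩ := le_iff_exists_add.mp h
  rw [Finsupp.degree_eq_weight_one, map_add]
  exact le_self_add

lemma prod_X_isHomogeneous (C : Finset (Fin n)) :
    (∏ i ∈ C, X i : MvPolynomial (Fin n) K).IsHomogeneous C.card := by
  rw [prod_X_eq]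
  exact isHomogeneous_monomial _ (degree_ind C)

lemma constantCoeff_prod_X (C : Finset (Fin n)) (hC : C.Nonempty) :
    constantCoeff (∏ i ∈ C, X i : MvPolynomial (Fin n) K) = 0 := by
  rw [prod_X_eq, constantCoeff_monomial, if_neg]
  intro h0
  have hdeg := degree_ind C
  rw [h0, map_zero] at hdeg
  exact Finset.Nonempty.card_ne_zero hC hdeg.symm

lemma isHomogeneous_neg {p : MvPolynomial (Fin n) K} {d : ℕ} (h : p.IsHomogeneous d) :
    (-p).IsHomogeneous d := by
  rw [← mem_homogeneousSubmodule] at h ⊢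
  exact neg_mem h

lemma ker_Mz (hinj : Function.Injective e) :
    LinearMap.ker (Mz K A e ly).mulVecLin = ⊥ := by
  rw [eq_bot_iff]
  intro t ht
  rw [LinearMap.mem_ker, Matrix.mulVecLin_apply] at ht
  rw [Submodule.mem_bot]
  funext j
  have := congrFun ht j.succ
  rw [mulVec_succ'] at this
  rcases mul_eq_zero.mp this with h | h
  · exact absurd h (X_ne_zero _)
  · exact h

lemma range_Mats_one :
    LinearMap.range (Mats K A e ly 1).mulVecLin = ⊥ := by
  rw [eq_bot_iff]
  rintro x ⟨t, rfl⟩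
  rw [Submodule.mem_bot]
  funext k
  show Matrix.mulVec (fun _ _ => (0 : MvPolynomial (Fin n) K)) t k = 0
  simp [Matrix.mulVec, dotProduct]

end Extra

end Construction

end CoverAux

end

/-- For the graph `H` (complete graph on `A`, `|A| = m < n`, with a star centered at each
vertex of `A` having at least one leaf, the leaves being exactly the vertices outside `A`),
the ideal of vertex covers `I_c(H)` has a linear resolution — i.e. for some `d` it has a
(finite) minimal graded free resolution `⋯ → F₂ → F₁ → R → R/I_c(H) → 0` in which every
generator of `F_{j+1}` (the `j`-th term of the resolution of `I_c(H)`, so in particular all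
minimal generators of `I_c(H)`) has internal degree exactly `d + j` — if and only if
every star has exactly one edge. -/
theorem coverIdeal_linear_resolution_iff
    (n m : ℕ) (hmn : m < n) (K : Type*) [Field K]
    (A : Finset (Fin n)) (hA : A.card = m)
    (f : Fin n → Fin n) (hf : ∀ v : Fin n, v ∉ A → f v ∈ A)
    (hstar : ∀ a ∈ A, ∃ v : Fin n, v ∉ A ∧ f v = a)
    (H : SimpleGraph (Fin n))
    (hH : ∀ u v : Fin n, H.Adj u v ↔
      (u ∈ A ∧ v ∈ A ∧ u ≠ v) ∨ (u ∉ A ∧ v = f u) ∨ (v ∉ A ∧ u = f v)) :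
    (∃ (d : ℕ) (rk : ℕ → ℕ) (dgr : ∀ j : ℕ, Fin (rk j) → ℕ)
      (g : Fin (rk 0) → MvPolynomial (Fin n) K)
      (M : ∀ j : ℕ, Matrix (Fin (rk j)) (Fin (rk (j + 1))) (MvPolynomial (Fin n) K)),
      IsMinimalGradedFreeResolution (coverIdeal K H) rk dgr g M ∧
      (∃ p : ℕ, ∀ j : ℕ, p ≤ j → rk j = 0) ∧
      (∀ (j : ℕ) (i : Fin (rk j)), dgr j i = d + j))
    ↔ (∀ a ∈ A, (Finset.univ.filter fun v : Fin n => v ∉ A ∧ f v = a).card = 1) := by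
  classical
  have hm1 : 1 ≤ m := by
    have hex : ∃ v : Fin n, v ∉ A := by
      by_contra hall
      push_neg at hall
      have : A = Finset.univ := Finset.eq_univ_iff_forall.mpr hall
      rw [this, Finset.card_univ, Fintype.card_fin] at hA
      omega
    obtain ⟨v0, hv0⟩ := hex
    have : f v0 ∈ A := hf v0 hv0
    have : 0 < A.card := Finset.card_pos.mpr ⟨f v0, this⟩
    omega
  constructor
  · rintro ⟨d, rk, dgr, g, M, ⟨hspan, hhom, hconst, hMhom, hMmin, hker0, hkerj⟩, hfin, hdgr⟩
    intro a ha
    have hg : ∀ i, (g i).IsHomogeneous d := by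
      intro i
      have h1 := hhom i
      rwa [hdgr 0 i, Nat.add_zero] at h1
    have hdm : d ≤ m := by
      have hmem : (monomial (CoverAux.ind A) (1 : K)) ∈ Ideal.span (Set.range g) := by
        rw [hspan]; exact CoverAux.monomial_ind_mem (CoverAux.cover_A hH hf)
      have h2 := CoverAux.degree_le_of_homogeneous_gens hg hmem
      rwa [CoverAux.degree_ind, hA] at h2
    set S := A.erase a ∪ Finset.univ.filter (fun v => v ∉ A ∧ f v = a) with hSdef
    have hcovS : IsVertexCover H ↑S := CoverAux.cover_S hH hf ha
    have hmemS : (monomial (CoverAux.ind S) (1 : K)) ∈ Ideal.span (Set.range g) := by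
      rw [hspan]; exact CoverAux.monomial_ind_mem hcovS
    obtain ⟨i, v, hv, hvle⟩ := CoverAux.exists_support_divisor hmemS
    have hvdeg : v.degree = d := by
      have h3 := hg i (MvPolynomial.mem_support_iff.mp hv)
      rw [Finsupp.degree_eq_weight_one]
      exact h3
    have hgi : g i ∈ coverIdeal K H := by
      rw [← hspan]; exact Ideal.subset_span ⟨i, rfl⟩
    obtain ⟨C, hCcov, hCle⟩ := CoverAux.support_subset_covers hgi v hv
    have hCS : C ⊆ S := CoverAux.ind_le_ind_iff.mp (hCle.trans hvle)
    have haC : a ∉ C := fun h => CoverAux.a_not_mem_S ha (hCS h)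
    have hSC : S ⊆ C := CoverAux.cover_min hH ha hCcov haC
    have hCeq : C = S := Finset.Subset.antisymm hCS hSC
    have hcardC : C.card ≤ d := by
      have h4 := CoverAux.degree_mono hCle
      rwa [CoverAux.degree_ind, hvdeg] at h4
    by_contra hne
    have hl1 : 1 ≤ (Finset.univ.filter fun v : Fin n => v ∉ A ∧ f v = a).card := by
      obtain ⟨w, hw1, hw2⟩ := hstar a ha
      exact Finset.card_pos.mpr ⟨w, Finset.mem_filter.mpr ⟨Finset.mem_univ w, hw1, hw2⟩⟩
    have hcardS : S.card = A.card - 1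
        + (Finset.univ.filter fun v : Fin n => v ∉ A ∧ f v = a).card :=
      CoverAux.card_S ha
    rw [hCeq] at hcardC
    rw [hA] at hcardS
    omega
  · intro hone
    -- enumeration of A
    set e : Fin m → Fin n := fun i => ((A.equivFin.symm (Fin.cast hA.symm i)) : Fin n) with he_def
    have he : ∀ i, e i ∈ A := fun i => (A.equivFin.symm (Fin.cast hA.symm i)).2
    have hinj : Function.Injective e := by
      intro i j hij
      have h1 : A.equivFin.symm (Fin.cast hA.symm i) = A.equivFin.symm (Fin.cast hA.symm j) :=
        Subtype.ext hij
      have h2 := A.equivFin.symm.injective h1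
      have h3 : (Fin.cast hA.symm i).val = (Fin.cast hA.symm j).val := by rw [h2]
      exact Fin.ext h3
    have hes : ∀ a ∈ A, ∃ i, e i = a := by
      intro a ha
      refine ⟨Fin.cast hA (A.equivFin ⟨a, ha⟩), ?_⟩
      have h1 : Fin.cast hA.symm (Fin.cast hA (A.equivFin ⟨a, ha⟩)) = A.equivFin ⟨a, ha⟩ :=
        Fin.ext rfl
      rw [he_def]
      simp only [h1, Equiv.symm_apply_apply]
    -- leaves
    have hsing : ∀ i : Fin m, ∃ w : Fin n,
        (Finset.univ.filter fun v : Fin n => v ∉ A ∧ f v = e i) = {w} := by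
      intro i
      exact Finset.card_eq_one.mp (hone (e i) (he i))
    choose ly hly' using hsing
    have hlymem : ∀ i, ly i ∉ A ∧ f (ly i) = e i := by
      intro i
      have : ly i ∈ ({ly i} : Finset (Fin n)) := Finset.mem_singleton_self _
      rw [← hly' i, Finset.mem_filter] at this
      exact this.2
    have hly : ∀ i, ly i ∉ A := fun i => (hlymem i).1
    have hlyf : ∀ i, f (ly i) = e i := fun i => (hlymem i).2
    have huniq : ∀ (i : Fin m) (w : Fin n), w ∉ A → f w = e i → w = ly i := by
      intro i w hw1 hw2
      have : w ∈ (Finset.univ.filter fun v : Fin n => v ∉ A ∧ f v = e i) :=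
        Finset.mem_filter.mpr ⟨Finset.mem_univ w, hw1, hw2⟩
      rw [hly' i, Finset.mem_singleton] at this
      exact this
    refine ⟨m, CoverAux.Rk m, fun j _ => m + j, CoverAux.Gens K A e ly,
      CoverAux.Mats K A e ly, ⟨?_, ?_, ?_, ?_, ?_, ?_, ?_⟩, ⟨2, ?_⟩, fun j i => rfl⟩
    · exact CoverAux.span_gens hH hf he hes hly hlyf huniq
    · -- homogeneity of generators
      intro i
      induction i using Fin.cases with
      | zero =>
          have h1 : (CoverAux.Gens K A e ly 0) = ∏ v ∈ A, X v := by
            rw [CoverAux.Gens, Fin.cases_zero]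
          rw [h1]
          have := CoverAux.prod_X_isHomogeneous (K := K) A
          rwa [hA] at this
      | succ j =>
          have h1 : (CoverAux.Gens K A e ly j.succ)
              = ∏ v ∈ insert (ly j) (A.erase (e j)), X v := by
            rw [CoverAux.Gens, Fin.cases_succ]
          rw [h1]
          have hcard : (insert (ly j) (A.erase (e j))).card = m := by
            rw [Finset.card_insert_of_notMem
              (fun h => hly j (Finset.mem_of_mem_erase h)),
              Finset.card_erase_of_mem (he j), hA]
            omega
          have := CoverAux.prod_X_isHomogeneous (K := K) (insert (ly j) (A.erase (e j)))
          rwa [hcard] at this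
    · -- constant coefficient zero
      intro i
      induction i using Fin.cases with
      | zero =>
          have h1 : (CoverAux.Gens K A e ly 0) = ∏ v ∈ A, X v := by
            rw [CoverAux.Gens, Fin.cases_zero]
          rw [h1]
          refine CoverAux.constantCoeff_prod_X A ?_
          exact Finset.card_pos.mp (by omega)
      | succ j =>
          have h1 : (CoverAux.Gens K A e ly j.succ)
              = ∏ v ∈ insert (ly j) (A.erase (e j)), X v := by
            rw [CoverAux.Gens, Fin.cases_succ]
          rw [h1]
          exact CoverAux.constantCoeff_prod_X _ (Finset.insert_nonempty _ _)
    · -- homogeneity of matrix entries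
      intro j k i
      match j with
      | 0 =>
          have hdeg : m + (0 + 1) - (m + 0) = 1 := by omega
          rw [hdeg]
          show (CoverAux.Mz K A e ly k i).IsHomogeneous 1
          unfold CoverAux.Mz
          induction k using Fin.cases with
          | zero =>
              rw [Fin.cases_zero]
              exact CoverAux.isHomogeneous_neg (isHomogeneous_X K (ly i))
          | succ k' =>
              rw [Fin.cases_succ]
              split_ifs with h
              · exact isHomogeneous_X K (e i)
              · exact isHomogeneous_zero _ _ _
      | (j' + 1) =>
          show (0 : MvPolynomial (Fin n) K).IsHomogeneous _
          exact isHomogeneous_zero _ _ _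
    · -- minimality
      intro j k i hle
      exfalso
      have h5 : m + (j + 1) ≤ m + j := hle
      omega
    · exact CoverAux.exact_first he hinj hly
    · intro j
      match j with
      | 0 =>
          rw [show CoverAux.Mats K A e ly 0 = CoverAux.Mz K A e ly from rfl]
          exact (CoverAux.ker_Mz hinj).trans CoverAux.range_Mats_one.symm
      | (j' + 1) =>
          ext x
          have hx : x = 0 := funext fun i => Fin.elim0 i
          subst hx
          simp only [Submodule.zero_mem]
    · intro j hj
      obtain ⟨j', rfl⟩ : ∃ j', j = j' + 2 := ⟨j - 2, by omega⟩
      rfl
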